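/- Let κ ◁ λ be regular cardinals (κ sharply smaller than λ). Then for any κ-directed poset P, the κ-directed subsets of P of size < λ form a λ-directed poset under inclusion. -/

import Mathlib

open Cardinal

namespace Stmt14

/-- `κ` is sharply smaller than `λ` (`κ ◁ λ`): for every set `X` of size `< λ`, the
poset of subsets of `X` of size `< κ` has a cofinal subset of size `< λ`. -/
def SharplySmaller (κ lam : Cardinal.{0}) : Prop :=
  ∀ X : Type, #X < lam → ∃ S : Set (Set X),
    (∀ s ∈ S, #s < κ) ∧ #S < lam ∧ ∀ t : Set X, #t < κ → ∃ s ∈ S, t ⊆ s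

/-- A subset `A` of a poset is `μ`-directed: every subset of `A` of size `< μ` has an
upper bound in `A`. -/
def IsDirectedOfSize {P : Type} [PartialOrder P] (μ : Cardinal.{0}) (A : Set P) : Prop :=
  ∀ s : Set P, s ⊆ A → #s < μ → ∃ p ∈ A, ∀ x ∈ s, x ≤ p

section Aux

variable {κ lam : Cardinal.{0}} {P : Type} [PartialOrder P]

/-- One-step closure: enlarge `X` to a set containing upper bounds for all `<κ` subsets
of `X`, without increasing the size beyond `< lam`. -/
lemma exists_step (hlam : lam.IsRegular) (hsharp : SharplySmaller κ lam)
    (hP : ∀ s : Set P, #s < κ → ∃ p : P, ∀ x ∈ s, x ≤ p) (X : Set P) :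
    ∃ Y : Set P, X ⊆ Y ∧ (#X < lam → #Y < lam ∧
      ∀ t : Set P, t ⊆ X → #t < κ → ∃ p ∈ Y, ∀ x ∈ t, x ≤ p) := by
  classical
  by_cases hX : #X < lam
  · obtain ⟨S, hSsmall, hScard, hScov⟩ := hsharp X hX
    have hub : ∀ s : S, ∃ p : P, ∀ x ∈ (Subtype.val '' (s : Set X) : Set P), x ≤ p := by
      intro s
      exact hP _ (lt_of_le_of_lt Cardinal.mk_image_le (hSsmall s s.2))
    choose p hp using hub
    refine ⟨X ∪ Set.range p, Set.subset_union_left, fun _ => ⟨?_, ?_⟩⟩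
    · have : #(X ∪ Set.range p : Set P) ≤ #X + #S := by
        calc #(X ∪ Set.range p : Set P) ≤ #X + #(Set.range p) := Cardinal.mk_union_le _ _
          _ ≤ #X + #S := by
              gcongr
              simpa using Cardinal.mk_range_le (f := p)
      exact lt_of_le_of_lt this (Cardinal.add_lt_of_lt hlam.aleph0_le hX hScard)
    · intro t htX htκ
      have ht' : #(Subtype.val ⁻¹' t : Set ↥X) ≤ #t :=
        Cardinal.mk_preimage_of_injective _ _ Subtype.val_injective
      obtain ⟨s, hsS, hts⟩ := hScov _ (lt_of_le_of_lt ht' htκ)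
      refine ⟨p ⟨s, hsS⟩, Or.inr (Set.mem_range_self _), fun x hx => ?_⟩
      exact hp ⟨s, hsS⟩ x ⟨⟨x, htX hx⟩, hts hx, rfl⟩
  · exact ⟨X, subset_rfl, fun h => absurd h hX⟩

/-- Transfinite iteration of a closure operator `F`, starting from `U`, indexed by
`c.ord.ToType`. -/
noncomputable def iter (F : Set P → Set P) (U : Set P) (c : Cardinal.{0}) :
    c.ord.ToType → Set P :=
  fun i => U ∪ ⋃ j : Set.Iio i, F (iter F U c j.1)
termination_by i => i
decreasing_by exact j.2

omit [PartialOrder P] in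
lemma iter_eq (F : Set P → Set P) (U : Set P) (c : Cardinal.{0}) (i : c.ord.ToType) :
    iter F U c i = U ∪ ⋃ j : Set.Iio i, F (iter F U c j.1) := by
  rw [iter]

end Aux

/-- Let `κ ◁ λ` be regular cardinals with `κ` sharply smaller than `λ`. For any
`κ`-directed poset `P`, the `κ`-directed subsets of `P` of size `< λ` form a
`λ`-directed poset under inclusion. -/
theorem kappaDirectedSubsets_lambdaDirected
    (κ lam : Cardinal.{0}) (hκ : κ.IsRegular) (hlam : lam.IsRegular)
    (hsharp : SharplySmaller κ lam)
    (P : Type) [PartialOrder P]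
    (hP : ∀ s : Set P, #s < κ → ∃ p : P, ∀ x ∈ s, x ≤ p) :
    ∀ S : Set {A : Set P // IsDirectedOfSize κ A ∧ #A < lam},
      #S < lam → ∃ B : {A : Set P // IsDirectedOfSize κ A ∧ #A < lam},
        ∀ A ∈ S, A.val ⊆ B.val := by
  classical
  intro S hS
  obtain ⟨F, hF⟩ := Classical.axiomOfChoice (exists_step hlam hsharp hP)
  have hFsub : ∀ X : Set P, X ⊆ F X := fun X => (hF X).1
  have hFcard : ∀ X : Set P, #X < lam → #(F X) < lam := fun X h => ((hF X).2 h).1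
  have hFdir : ∀ X : Set P, #X < lam →
      ∀ t : Set P, t ⊆ X → #t < κ → ∃ p ∈ F X, ∀ x ∈ t, x ≤ p :=
    fun X h => ((hF X).2 h).2
  set U : Set P := ⋃ A ∈ S, A.1 with hUdef
  have hAU : ∀ A ∈ S, A.1 ⊆ U := fun A hA => Set.subset_biUnion_of_mem hA
  have hU : #U < lam := by
    refine lt_of_le_of_lt (Cardinal.mk_biUnion_le _ _) ?_
    exact Cardinal.mul_lt_of_lt hlam.aleph0_le hS
      (Cardinal.iSup_lt_of_isRegular hlam hS fun A => A.1.2.2)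
  rcases lt_or_ge κ lam with hkl | hlk
  · -- main case : κ < lam, transfinite iteration of length κ
    have hne : Nonempty κ.ord.ToType := by
      rw [Ordinal.toType_nonempty_iff_ne_zero, ne_eq, Cardinal.ord_eq_zero]
      exact hκ.pos.ne'
    haveI : WellFoundedLT κ.ord.ToType := inferInstance
    haveI : IsWellOrder κ.ord.ToType (· < ·) := isWellOrder_lt
    set f : κ.ord.ToType → Set P := iter F U κ with hfdef
    have hUiter : ∀ i, U ⊆ f i := by
      intro i
      rw [hfdef, iter_eq]
      exact Set.subset_union_left
    have hFiter : ∀ i j, j < i → F (f j) ⊆ f i := by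
      intro i j h
      rw [hfdef]
      conv_rhs => rw [iter_eq]
      exact (Set.subset_iUnion (fun j : Set.Iio i => F (iter F U κ j.1)) ⟨j, h⟩).trans
        Set.subset_union_right
    have hcard : ∀ i, #(f i) < lam := by
      intro i
      induction i using WellFoundedLT.induction with
      | ind i IH =>
        rw [hfdef, iter_eq]
        have h1 : #(Set.Iio i) < lam := (Cardinal.mk_Iio_ord_toType i).trans hkl
        have h2 : #(⋃ j : Set.Iio i, F (iter F U κ j.1)) < lam := by
          refine lt_of_le_of_lt (Cardinal.mk_iUnion_le _) ?_
          exact Cardinal.mul_lt_of_lt hlam.aleph0_le h1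
            (Cardinal.iSup_lt_of_isRegular hlam h1 fun j => hFcard _ (IH j.1 j.2))
        exact lt_of_le_of_lt (Cardinal.mk_union_le _ _)
          (Cardinal.add_lt_of_lt hlam.aleph0_le hU h2)
    set B : Set P := U ∪ ⋃ i, F (f i) with hBdef
    have hiterB : ∀ i, F (f i) ⊆ B := fun i =>
      (Set.subset_iUnion (fun i => F (f i)) i).trans Set.subset_union_right
    have hcardB : #B < lam := by
      have hι : #κ.ord.ToType < lam := by rwa [Cardinal.mk_toType, Cardinal.card_ord]
      have h2 : #(⋃ i, F (f i)) < lam := by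
        refine lt_of_le_of_lt (Cardinal.mk_iUnion_le _) ?_
        exact Cardinal.mul_lt_of_lt hlam.aleph0_le hι
          (Cardinal.iSup_lt_of_isRegular hlam hι fun i => hFcard _ (hcard i))
      exact lt_of_le_of_lt (Cardinal.mk_union_le _ _)
        (Cardinal.add_lt_of_lt hlam.aleph0_le hU h2)
    have hdir : IsDirectedOfSize κ B := by
      intro t htB htκ
      have hx : ∀ x : t, ∃ i, (x : P) ∈ F (f i) := by
        intro x
        rcases htB x.2 with hxU | hxi
        · obtain ⟨i⟩ := hne
          exact ⟨i, hFsub _ (hUiter i hxU)⟩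
        · exact Set.mem_iUnion.1 hxi
      choose g hg using hx
      have hrg : #(Set.range g) <
          Ordinal.cof (Ordinal.type ((· < ·) : κ.ord.ToType → κ.ord.ToType → Prop)) := by
        rw [Ordinal.type_toType, hκ.cof_eq]
        exact lt_of_le_of_lt Cardinal.mk_range_le htκ
      have hbdd : Set.Bounded ((· < ·) : κ.ord.ToType → κ.ord.ToType → Prop)
          (Set.range g) := by
          rw [Ordinal.cof_type] at hrg
          exact not_isCofinal_iff.1 fun h => hrg.not_ge (Order.cof_le h)
      obtain ⟨i, hi⟩ := hbdd
      have htfi : t ⊆ f i := by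
        intro x hxt
        exact hFiter i (g ⟨x, hxt⟩) (hi _ (Set.mem_range_self _)) (hg ⟨x, hxt⟩)
      obtain ⟨p, hpF, hp⟩ := hFdir (f i) (hcard i) t htfi htκ
      exact ⟨p, hiterB i hpF, hp⟩
    exact ⟨⟨B, hdir, hcardB⟩, fun A hA => (hAU A hA).trans Set.subset_union_left⟩
  · -- degenerate case : lam ≤ κ, so the whole union is small and has an upper bound
    obtain ⟨p, hp⟩ := hP U (hU.trans_le hlk)
    refine ⟨⟨insert p U, ?_, ?_⟩, fun A hA => (hAU A hA).trans (Set.subset_insert _ _)⟩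
    · intro s hs hsκ
      refine ⟨p, Set.mem_insert _ _, fun x hx => ?_⟩
      rcases hs hx with rfl | hxU
      · exact le_rfl
      · exact hp x hxU
    · refine lt_of_le_of_lt Cardinal.mk_insert_le
        (Cardinal.add_lt_of_lt hlam.aleph0_le hU ?_)
      exact lt_of_lt_of_le Cardinal.one_lt_aleph0 hlam.aleph0_le

end Stmt14
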